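/- For fixed even q ≥ 2, the probability that a uniformly random NCC word of length n over {0,...,q-1} occupies exactly q/2 levels tends to 1 as n → ∞. Formally: (q/2)! · S(n, q/2) · (q/2 + 1) divided by ∑_{k=1}^{q/2} k! · S(n,k) · C(q-k+1,k) tends to 1 as n → ∞. -/

import Mathlib

open Filter

/-- Stirling numbers of the second kind. -/
def stirling : ℕ → ℕ → ℕ
  | 0, 0 => 1
  | 0, _ + 1 => 0
  | _ + 1, 0 => 0
  | n + 1, k + 1 => stirling n k + (k + 1) * stirling n (k + 1)

lemma stirling_of_lt : ∀ n k : ℕ, n < k → stirling n k = 0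
  | 0, k + 1, _ => by simp [stirling]
  | n + 1, k + 1, h => by
    rw [stirling, stirling_of_lt n k (by omega), stirling_of_lt n (k+1) (by omega)]
    ring

lemma stirling_self (n : ℕ) : stirling n n = 1 := by
  induction n with
  | zero => rfl
  | succ n ih => rw [stirling, ih, stirling_of_lt n (n+1) (by omega)]; ring

lemma stirling_zero_right (n : ℕ) : stirling n 0 = 0 ^ n := by
  cases n <;> simp [stirling]

lemma stirling_succ_add (n k : ℕ) : stirling n (k + 1) + k ^ n ≤ (k + 1) ^ n := by
  induction n generalizing k with
  | zero => simp [stirling]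
  | succ n ih =>
    rw [stirling]
    cases k with
    | zero =>
      have h0 := ih 0
      have := stirling_zero_right n
      simp only [pow_succ]
      omega
    | succ j =>
      have h1 := ih j
      have h2 := ih (j + 1)
      have h3 : (j + 2) * (stirling n (j + 2) + (j + 1) ^ n) ≤ (j + 2) * (j + 2) ^ n :=
        Nat.mul_le_mul_left _ h2
      have h3' : (j + 2) * stirling n (j + 2) + (j + 2) * (j + 1) ^ n
          ≤ (j + 2) * (j + 2) ^ n := by rw [← Nat.mul_add]; exact h3
      have e1 : (j + 1 + 1) ^ (n + 1) = (j + 2) * (j + 2) ^ n := by ring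
      have e2 : (j + 1) ^ (n + 1) = (j + 1) * (j + 1) ^ n := by ring
      have h4 : (j+2)*(j+1)^n = (j+1)*(j+1)^n + (j+1)^n := by ring
      rw [e1, e2, show j + 1 + 1 = j + 2 from rfl]
      generalize stirling n (j+1) = A at h1 ⊢
      generalize stirling n (j+2) = B at h3' ⊢
      generalize hp : j^n = P at h1
      generalize hq : (j+1)^n = Q at h1 h3' h4 ⊢
      generalize hr : (j+2)^n = R at h3' ⊢
      linarith

lemma stirling_le (n k : ℕ) (hk : 1 ≤ k) : stirling n k ≤ k ^ n := by
  obtain ⟨j, rfl⟩ := Nat.exists_eq_add_of_le hk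
  rw [add_comm 1 j]
  have := stirling_succ_add n j
  omega

lemma stirling_ge (m t : ℕ) (hm : 1 ≤ m) : m ^ t ≤ stirling (m + t) m := by
  induction t with
  | zero => simp [stirling_self]
  | succ t ih =>
    obtain ⟨j, rfl⟩ := Nat.exists_eq_add_of_le hm
    rw [show (1:ℕ)+j = j+1 from by omega] at *
    calc (j+1)^(t+1) = (j+1) * (j+1)^t := by ring
    _ ≤ (j+1) * stirling (j+1+t) (j+1) := Nat.mul_le_mul_left _ ih
    _ ≤ stirling (j+1+t) j + (j+1) * stirling (j+1+t) (j+1) := by omega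
    _ = stirling (j+1+(t+1)) (j+1) := by
        rw [show j+1+(t+1) = (j+1+t)+1 from by omega]; rfl

/-- For fixed even `q ≥ 2`, the fraction of NCC words of length `n` occupying
exactly `q/2` levels tends to `1` as `n → ∞`. -/
theorem prob_full_occupancy_tendsto_one (q : ℕ) (hq : Even q) (hq2 : 2 ≤ q) :
    Tendsto (fun n : ℕ =>
        ((Nat.factorial (q / 2) * stirling n (q / 2) * (q / 2 + 1) : ℕ) : ℝ) /
          ((∑ k ∈ Finset.Icc 1 (q / 2),
            Nat.factorial k * stirling n k * Nat.choose (q - k + 1) k : ℕ) : ℝ))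
      atTop (nhds 1) := by
  obtain ⟨m, rfl⟩ := hq
  obtain ⟨p, rfl⟩ : ∃ p, m = p + 1 := ⟨m - 1, by omega⟩
  have hdiv : (p + 1 + (p + 1)) / 2 = p + 1 := by omega
  simp only [hdiv]
  set N : ℕ → ℕ := fun n => Nat.factorial (p+1) * stirling n (p+1) * (p+1+1) with hN
  set R : ℕ → ℕ := fun n => ∑ k ∈ Finset.Icc 1 p,
      Nat.factorial k * stirling n k * Nat.choose (p+1+(p+1)-k+1) k with hR
  set K : ℕ := ∑ k ∈ Finset.Icc 1 p, Nat.factorial k * Nat.choose (p+1+(p+1)-k+1) k with hK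
  have hsplit : ∀ n, (∑ k ∈ Finset.Icc 1 (p+1),
      Nat.factorial k * stirling n k * Nat.choose (p+1+(p+1)-k+1) k) = R n + N n := by
    intro n
    rw [Finset.sum_Icc_succ_top (by omega)]
    congr 1
    rw [show p+1+(p+1)-(p+1)+1 = p+2 from by omega]
    rw [Nat.choose_succ_self_right]
  simp only [hsplit]
  -- positivity of N for large n
  have hNge : ∀ t : ℕ, (p+1) ^ t ≤ N ((p+1) + t) := by
    intro t
    calc (p+1)^t ≤ stirling ((p+1)+t) (p+1) := stirling_ge (p+1) t (by omega)
    _ ≤ N ((p+1)+t) := by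
        have h1 := Nat.factorial_pos (p+1)
        have : stirling ((p+1)+t) (p+1) ≤ Nat.factorial (p+1) * stirling ((p+1)+t) (p+1) :=
          Nat.le_mul_of_pos_left _ h1
        calc stirling ((p+1)+t) (p+1)
            ≤ Nat.factorial (p+1) * stirling ((p+1)+t) (p+1) := this
          _ ≤ Nat.factorial (p+1) * stirling ((p+1)+t) (p+1) * (p+1+1) :=
              Nat.le_mul_of_pos_right _ (by omega)
  have hRle : ∀ n : ℕ, R n ≤ K * p ^ n := by
    intro n
    rw [hR, hK, Finset.sum_mul]
    apply Finset.sum_le_sum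
    intro k hk
    simp only [Finset.mem_Icc] at hk
    calc Nat.factorial k * stirling n k * Nat.choose (p+1+(p+1)-k+1) k
        ≤ Nat.factorial k * p ^ n * Nat.choose (p+1+(p+1)-k+1) k := by
          gcongr
          exact le_trans (stirling_le n k hk.1) (Nat.pow_le_pow_left hk.2 n)
      _ = Nat.factorial k * Nat.choose (p+1+(p+1)-k+1) k * p ^ n := by ring
  -- the ratio R/N tends to 0
  have hg0 : Tendsto (fun n => (R n : ℝ) / (N n : ℝ)) atTop (nhds 0) := by
    have hb : Tendsto (fun n : ℕ => (K : ℝ) * ((p+1:ℝ))^(p+1) * ((p:ℝ)/(p+1))^n)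
        atTop (nhds 0) := by
      have hlt : (p:ℝ)/(p+1) < 1 := by
        rw [div_lt_one (by positivity)]; norm_num
      have h0 : (0:ℝ) ≤ (p:ℝ)/(p+1) := by positivity
      have := tendsto_pow_atTop_nhds_zero_of_lt_one h0 hlt
      simpa using this.const_mul ((K : ℝ) * ((p+1:ℝ))^(p+1))
    apply squeeze_zero' (Filter.Eventually.of_forall fun n => by positivity)
      _ hb
    rw [eventually_atTop]
    refine ⟨p+1, fun n hn => ?_⟩
    obtain ⟨t, rfl⟩ : ∃ t, n = (p+1) + t := ⟨n - (p+1), by omega⟩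
    have hNpos : (0:ℝ) < (N ((p+1)+t) : ℝ) := by
      have := hNge t
      have : 1 ≤ N ((p+1)+t) := le_trans (Nat.one_le_pow _ _ (by omega)) this
      exact_mod_cast this
    have h1 : ((R ((p+1)+t)) : ℝ) / (N ((p+1)+t) : ℝ)
        ≤ ((K : ℝ) * (p:ℝ)^((p+1)+t)) / ((p+1:ℝ))^t := by
      apply div_le_div₀ (by positivity) _ (by positivity) _
      · calc ((R ((p+1)+t) : ℕ) : ℝ) ≤ ((K * p ^ ((p+1)+t) : ℕ) : ℝ) := by
              exact_mod_cast hRle ((p+1)+t)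
          _ = (K:ℝ) * (p:ℝ)^((p+1)+t) := by push_cast; ring
      · exact_mod_cast hNge t
    refine h1.trans (le_of_eq ?_)
    rw [div_pow]
    rw [show ((p:ℝ)+1)^((p+1)+t) = ((p:ℝ)+1)^(p+1) * ((p:ℝ)+1)^t from by rw [← pow_add]]
    have hne : ((p:ℝ)+1) ≠ 0 := by positivity
    field_simp
  -- conclude
  have key : Tendsto (fun n => ((R n : ℝ) / (N n : ℝ) + 1)⁻¹) atTop (nhds 1) := by
    have h1 : Tendsto (fun n => (R n : ℝ) / (N n : ℝ) + 1) atTop (nhds 1) := by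
      simpa using hg0.add (tendsto_const_nhds (x := (1:ℝ)))
    have := h1.inv₀ (by norm_num)
    simpa using this
  apply key.congr'
  rw [EventuallyEq, eventually_atTop]
  refine ⟨p+1, fun n hn => ?_⟩
  obtain ⟨t, rfl⟩ : ∃ t, n = (p+1) + t := ⟨n - (p+1), by omega⟩
  have hNpos : (0:ℝ) < (N ((p+1)+t) : ℝ) := by
    have h := hNge t
    have : 1 ≤ N ((p+1)+t) := le_trans (Nat.one_le_pow _ _ (by omega)) h
    exact_mod_cast this
  have hNne : (N ((p+1)+t) : ℝ) ≠ 0 := ne_of_gt hNpos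
  rw [div_add' _ _ _ hNne, inv_div, one_mul, ← Nat.cast_add]
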